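/- (Lemma 2.5, Aouchiche–Hansen) Let G be a connected graph and let u and v be two non-adjacent vertices of G. Then ρ_L(G + uv) ≤ ρ_L(G), where G + uv is the graph obtained from G by adding the edge uv. -/

import Mathlib

open Matrix Finset

/-- The transmission of a vertex: sum of distances to all vertices. -/
noncomputable def transmission {V : Type*} [Fintype V] (G : SimpleGraph V) (u : V) : ℝ :=
  ∑ w : V, (G.dist u w : ℝ)

/-- The distance Laplacian matrix `L_D(G) = Tr(G) - D(G)`. -/
noncomputable def distLaplacian {V : Type*} [Fintype V] (G : SimpleGraph V) :
    Matrix V V ℝ := fun u v =>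
  letI := Classical.decEq V
  (if u = v then transmission G u else 0) - (G.dist u v : ℝ)

/-- The largest eigenvalue of the distance Laplacian (distance Laplacian spectral radius). -/
noncomputable def rhoL {V : Type*} [Fintype V] (G : SimpleGraph V) : ℝ :=
  sSup {μ : ℝ | ∃ x : V → ℝ, x ≠ 0 ∧ (distLaplacian G).mulVec x = μ • x}

/-- Distances do not increase when edges are added to a connected graph. -/
lemma dist_mono' {V : Type*} {G G' : SimpleGraph V} (hG : G.Connected) (h : G ≤ G')
    (a b : V) : G'.dist a b ≤ G.dist a b := by
  obtain ⟨p, hp⟩ := (hG a b).exists_walk_length_eq_dist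
  calc G'.dist a b ≤ (p.mapLe h).length := SimpleGraph.dist_le _
    _ = G.dist a b := by rw [SimpleGraph.Walk.length_map, hp]

/-- The distance Laplacian is a real symmetric (hence Hermitian) matrix. -/
lemma distLaplacian_isHermitian {V : Type*} [Fintype V] (G : SimpleGraph V) :
    (distLaplacian G).IsHermitian := by
  ext a b
  simp only [Matrix.conjTranspose_apply, distLaplacian, star_sub, star_trivial]
  by_cases h : a = b
  · subst h; rfl
  · rw [if_neg h, if_neg (Ne.symm h), SimpleGraph.dist_comm]

/-- The quadratic form of the distance Laplacian. -/
lemma quadForm {V : Type*} [Fintype V] (G : SimpleGraph V) (x : V → ℝ) :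
    x ⬝ᵥ (distLaplacian G).mulVec x
      = (1/2) * ∑ a : V, ∑ b : V, (G.dist a b : ℝ) * (x a - x b)^2 := by
  classical
  have hL : x ⬝ᵥ (distLaplacian G).mulVec x
      = ∑ a : V, ∑ b : V, ((G.dist a b : ℝ) * x a ^ 2 - (G.dist a b : ℝ) * (x a * x b)) := by
    unfold distLaplacian transmission
    simp only [dotProduct, Matrix.mulVec, sub_mul, ite_mul, zero_mul,
      Finset.sum_sub_distrib, Finset.sum_ite_eq, Finset.mem_univ, if_true, Finset.mul_sum,
      mul_sub]
    congr 1
    · refine Finset.sum_congr rfl fun a _ => ?_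
      rw [Finset.sum_mul, Finset.mul_sum]
      refine Finset.sum_congr rfl fun b _ => by ring
    · refine Finset.sum_congr rfl fun a _ => Finset.sum_congr rfl fun b _ => by ring
  have hswap : ∑ a : V, ∑ b : V, (G.dist a b : ℝ) * x b ^ 2
      = ∑ a : V, ∑ b : V, (G.dist a b : ℝ) * x a ^ 2 := by
    rw [Finset.sum_comm]
    exact Finset.sum_congr rfl fun a _ => Finset.sum_congr rfl fun b _ => by
      rw [SimpleGraph.dist_comm]
  have hrhs : ∑ a : V, ∑ b : V, (G.dist a b : ℝ) * (x a - x b)^2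
      = ∑ a : V, ∑ b : V, ((G.dist a b : ℝ) * x a ^ 2 + (G.dist a b : ℝ) * x b ^ 2
          - 2 * ((G.dist a b : ℝ) * (x a * x b))) :=
    Finset.sum_congr rfl fun a _ => Finset.sum_congr rfl fun b _ => by ring
  rw [hL, hrhs]
  simp only [Finset.sum_sub_distrib, Finset.sum_add_distrib, ← Finset.mul_sum, hswap]
  ring_nf

/-- The set of eigenvalues of a real matrix is bounded above. -/
lemma eigen_bddAbove {V : Type*} [Fintype V] [DecidableEq V] (A : Matrix V V ℝ) :
    BddAbove {μ : ℝ | ∃ x : V → ℝ, x ≠ 0 ∧ A.mulVec x = μ • x} := by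
  refine ⟨‖(Matrix.toEuclideanLin A).toContinuousLinearMap‖, ?_⟩
  rintro μ ⟨x, hx, hAx⟩
  set T := (Matrix.toEuclideanLin A).toContinuousLinearMap with hT
  set y : EuclideanSpace ℝ V := (WithLp.equiv 2 (V → ℝ)).symm x with hy
  have hy0 : y ≠ 0 := by
    simpa [hy] using hx
  have hTy : T y = μ • y := by
    simp only [hT, LinearMap.coe_toContinuousLinearMap', hy,
      WithLp.equiv_symm_apply, Matrix.toEuclideanLin_toLp, Matrix.toLin'_apply, hAx]
    rfl
  have h1 : ‖T y‖ ≤ ‖T‖ * ‖y‖ := T.le_opNorm y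
  rw [hTy, norm_smul, Real.norm_eq_abs] at h1
  have hny : 0 < ‖y‖ := norm_pos_iff.mpr hy0
  have : |μ| ≤ ‖T‖ := le_of_mul_le_mul_right h1 hny
  exact le_trans (le_abs_self μ) this

/-- Comparison of largest eigenvalues of symmetric matrices whose quadratic forms
are comparable. -/
lemma sSup_eigen_le {V : Type*} [Fintype V] [Nonempty V] [DecidableEq V]
    (A B : Matrix V V ℝ) (hA : A.IsHermitian) (hB : B.IsHermitian)
    (h : ∀ x : V → ℝ, x ⬝ᵥ B.mulVec x ≤ x ⬝ᵥ A.mulVec x) :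
    sSup {μ : ℝ | ∃ x : V → ℝ, x ≠ 0 ∧ B.mulVec x = μ • x}
      ≤ sSup {μ : ℝ | ∃ x : V → ℝ, x ≠ 0 ∧ A.mulVec x = μ • x} := by
  classical
  haveI : Nontrivial (EuclideanSpace ℝ V) := inferInstance
  set TA := Matrix.toEuclideanLin A with hTA
  have hsymA : TA.IsSymmetric := Matrix.isHermitian_iff_isSymmetric.mp hA
  have hsymB : (Matrix.toEuclideanLin B).IsSymmetric := Matrix.isHermitian_iff_isSymmetric.mp hB
  -- eigen-equation transfer between `EuclideanSpace` and `V → ℝ`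
  have transfer : ∀ (M : Matrix V V ℝ) (μ : ℝ) (y : EuclideanSpace ℝ V),
      Matrix.toEuclideanLin M y = μ • y ↔
        M.mulVec (WithLp.equiv 2 (V → ℝ) y) = μ • (WithLp.equiv 2 (V → ℝ) y) := by
    intro M μ y
    constructor
    · intro hy
      have := congrArg (WithLp.equiv 2 (V → ℝ)) hy
      simpa [Matrix.piLp_ofLp_toEuclideanLin, Matrix.toLin'_apply] using this
    · intro hy
      apply (WithLp.equiv 2 (V → ℝ)).injective
      simpa [Matrix.piLp_ofLp_toEuclideanLin, Matrix.toLin'_apply] using hy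
  -- the top eigenvalue of `A`
  set lam : ℝ := ⨆ y : { y : EuclideanSpace ℝ V // y ≠ 0 },
      RCLike.re (inner ℝ (TA y) (y : EuclideanSpace ℝ V) : ℝ) / ‖(y : EuclideanSpace ℝ V)‖ ^ 2
    with hlam
  have hEig : Module.End.HasEigenvalue TA lam := by
    have := hsymA.hasEigenvalue_iSup_of_finiteDimensional
    simpa [hlam] using this
  obtain ⟨y0, hy0⟩ := hEig.exists_hasEigenvector
  have hy0ne : y0 ≠ 0 := hy0.right
  have hy0eq : TA y0 = lam • y0 := hy0.apply_eq_smul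
  have hlam_mem : lam ∈ {μ : ℝ | ∃ x : V → ℝ, x ≠ 0 ∧ A.mulVec x = μ • x} := by
    refine ⟨WithLp.equiv 2 (V → ℝ) y0, ?_, (transfer A lam y0).mp hy0eq⟩
    simpa using hy0ne
  have hlam_le : lam ≤ sSup {μ : ℝ | ∃ x : V → ℝ, x ≠ 0 ∧ A.mulVec x = μ • x} :=
    le_csSup (eigen_bddAbove A) hlam_mem
  -- `B` has at least one eigenvalue
  have hBne : {μ : ℝ | ∃ x : V → ℝ, x ≠ 0 ∧ B.mulVec x = μ • x}.Nonempty := by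
    obtain ⟨z, hz⟩ := hsymB.hasEigenvalue_iSup_of_finiteDimensional.exists_hasEigenvector
    exact ⟨_, WithLp.equiv 2 (V → ℝ) z, by simpa using hz.right,
      (transfer B _ z).mp hz.apply_eq_smul⟩
  -- the Rayleigh quotients of `A` are bounded above
  have hbddR : BddAbove (Set.range fun y : { y : EuclideanSpace ℝ V // y ≠ 0 } =>
      RCLike.re (inner ℝ (TA y) (y : EuclideanSpace ℝ V) : ℝ) / ‖(y : EuclideanSpace ℝ V)‖ ^ 2) := by
    refine ⟨‖TA.toContinuousLinearMap‖, ?_⟩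
    rintro r ⟨y, rfl⟩
    have hny : 0 < ‖(y : EuclideanSpace ℝ V)‖ := norm_pos_iff.mpr y.prop
    have h1 : (inner ℝ (TA y) (y : EuclideanSpace ℝ V) : ℝ)
        ≤ ‖TA (y : EuclideanSpace ℝ V)‖ * ‖(y : EuclideanSpace ℝ V)‖ :=
      real_inner_le_norm _ _
    have h2 : ‖TA (y : EuclideanSpace ℝ V)‖
        ≤ ‖TA.toContinuousLinearMap‖ * ‖(y : EuclideanSpace ℝ V)‖ :=
      TA.toContinuousLinearMap.le_opNorm _
    have h3 : (inner ℝ (TA y) (y : EuclideanSpace ℝ V) : ℝ)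
        ≤ ‖TA.toContinuousLinearMap‖ * ‖(y : EuclideanSpace ℝ V)‖ ^ 2 := by nlinarith
    rw [div_le_iff₀ (by positivity)]
    simpa using h3
  refine csSup_le hBne ?_
  rintro μ ⟨x, hx, hBx⟩
  set y : EuclideanSpace ℝ V := (WithLp.equiv 2 (V → ℝ)).symm x with hy
  have hy0 : y ≠ 0 := by simpa [hy] using hx
  have hxx : 0 < x ⬝ᵥ x := by
    have hdp : x ⬝ᵥ x = ∑ i, x i * x i := rfl
    obtain ⟨i, hi⟩ := Function.ne_iff.mp hx
    rw [hdp]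
    refine Finset.sum_pos' (fun j _ => mul_self_nonneg _) ⟨i, Finset.mem_univ i, ?_⟩
    exact mul_self_pos.mpr hi
  have hquadB : x ⬝ᵥ B.mulVec x = μ * (x ⬝ᵥ x) := by
    rw [hBx, dotProduct_smul]; rfl
  have hinner : (inner ℝ (TA y) (y : EuclideanSpace ℝ V) : ℝ) = x ⬝ᵥ A.mulVec x := by
    rw [dotProduct_comm]
    simp only [hy, hTA, WithLp.equiv_symm_apply, Matrix.toEuclideanLin_toLp, Matrix.toLin'_apply,
      EuclideanSpace.inner_toLp_toLp]
    rw [star_trivial]; exact dotProduct_comm _ _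
  have hnorm : ‖y‖ ^ 2 = x ⬝ᵥ x := by
    rw [← real_inner_self_eq_norm_sq]
    simp only [hy, EuclideanSpace.inner_toLp_toLp]
    rfl
  have hray : μ ≤ RCLike.re (inner ℝ (TA y) (y : EuclideanSpace ℝ V) : ℝ)
      / ‖(y : EuclideanSpace ℝ V)‖ ^ 2 := by
    have hre : RCLike.re (inner ℝ (TA y) (y : EuclideanSpace ℝ V) : ℝ) = x ⬝ᵥ A.mulVec x := by
      simpa using hinner
    rw [hre, hnorm, le_div_iff₀ hxx]
    calc μ * (x ⬝ᵥ x) = x ⬝ᵥ B.mulVec x := hquadB.symm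
      _ ≤ x ⬝ᵥ A.mulVec x := h x
  have hμlam : μ ≤ lam := le_trans hray (le_ciSup hbddR ⟨y, hy0⟩)
  exact le_trans hμlam hlam_le

/-- Lemma 2.5 (Aouchiche–Hansen): adding an edge between two non-adjacent vertices of a
connected graph does not increase the distance Laplacian spectral radius. -/
theorem rhoL_addEdge_le {V : Type*} [Fintype V] (G : SimpleGraph V) (hG : G.Connected)
    (u v : V) (huv : u ≠ v) (hadj : ¬ G.Adj u v) :
    rhoL (G ⊔ SimpleGraph.fromEdgeSet {s(u, v)}) ≤ rhoL G := by
  classical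
  rcases isEmpty_or_nonempty V with hV | hV
  · have h0 : ∀ H : SimpleGraph V, rhoL H = 0 := fun H => by
      unfold rhoL
      convert Real.sSup_empty using 2
      ext μ
      simp only [Set.mem_setOf_eq, Set.mem_empty_iff_false, iff_false, not_exists]
      rintro x ⟨hx, -⟩
      exact hx (funext fun a => (hV.false a).elim)
    rw [h0, h0]
  · set G' := G ⊔ SimpleGraph.fromEdgeSet {s(u, v)} with hG'def
    have hle : G ≤ G' := le_sup_left
    have hcmp : ∀ x : V → ℝ,
        x ⬝ᵥ (distLaplacian G').mulVec x ≤ x ⬝ᵥ (distLaplacian G).mulVec x := by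
      intro x
      rw [quadForm, quadForm]
      have hterm : ∀ a b : V,
          (G'.dist a b : ℝ) * (x a - x b)^2 ≤ (G.dist a b : ℝ) * (x a - x b)^2 := fun a b =>
        mul_le_mul_of_nonneg_right (Nat.cast_le.mpr (dist_mono' hG hle a b)) (sq_nonneg _)
      have hsum : ∑ a : V, ∑ b : V, (G'.dist a b : ℝ) * (x a - x b)^2
          ≤ ∑ a : V, ∑ b : V, (G.dist a b : ℝ) * (x a - x b)^2 :=
        Finset.sum_le_sum fun a _ => Finset.sum_le_sum fun b _ => hterm a b
      linarith
    exact sSup_eigen_le _ _ (distLaplacian_isHermitian G) (distLaplacian_isHermitian G') hcmp
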